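/- Derivability in the restricted proof system Reg is strictly weaker than in Reg⁺ in the following concrete sense: the infinite λ-term M₂ defined by the guarded recursion M₂ = λa. rec(a) with rec(a) = λb. (rec(b)) a (i.e., the infinite term λa.λb.(λc.((λd.(…) c)) b) a with ever-growing spine of distinct bound variables applied in reverse) is derivable in Reg (witnessed by a finite closed derivation using the del-rule that may remove any vacuous prefix variable), but is not derivable in Reg⁺ (where the del-rule may only remove the last prefix variable): the unique bottom-up Reg⁺-derivation attempt for ()M₂ produces an infinite tree with pairwise distinct sequents, so no FIX discharge is possible. Hence M₂ is regular but not strongly regular. -/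

import Mathlib

/-- Node labels of (nameless, de Bruijn) infinite λ-terms. -/
inductive Lab : Type
  | lam : Lab
  | app : Lab
  | var : ℕ → Lab
deriving DecidableEq

/-- Which child positions a node with a given label may have. -/
def okChild : Lab → Bool → Prop
  | .lam, false => True
  | .app, _ => True
  | _, _ => False

/-- Infinite λ-terms (in nameless de Bruijn style), represented as
labelled possibly-infinite binary trees given by their labelling function. -/
structure Tm : Type where
  lab : List Bool → Option Lab
  root : (lab []).isSome
  cons : ∀ p b, (lab (p ++ [b])).isSome ↔ ∃ l, lab p = some l ∧ okChild l b

namespace Tm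

/-- Subterm at a position. -/
def sub (t : Tm) (p : List Bool) (h : (t.lab p).isSome) : Tm where
  lab q := t.lab (p ++ q)
  root := by simpa using h
  cons q b := by
    have h' := t.cons (p ++ q) b
    simpa [List.append_assoc] using h'

/-- Auxiliary: number of λ-labels strictly above, accumulating the prefix. -/
def ldepthAux (t : Tm) : List Bool → List Bool → ℕ
  | _, [] => 0
  | pre, b :: p => (if t.lab pre = some .lam then 1 else 0) + t.ldepthAux (pre ++ [b]) p

/-- The number of λ-nodes strictly above position `p` in `t`. -/
def ldepth (t : Tm) (p : List Bool) : ℕ := t.ldepthAux [] p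

end Tm

def shiftLab (σ : ℕ → ℕ) : Lab → Lab
  | .var k => .var (σ k)
  | l => l

theorem okChild_shiftLab (σ : ℕ → ℕ) (l : Lab) (b : Bool) :
    okChild (shiftLab σ l) b ↔ okChild l b := by
  cases l <;> cases b <;> simp [shiftLab, okChild]

/-- Relabel all variable nodes, depending on their λ-depth. -/
def Tm.mapVar (t : Tm) (σ : ℕ → ℕ → ℕ) : Tm where
  lab p := (t.lab p).map (shiftLab (σ (t.ldepth p)))
  root := by
    have h := t.root
    cases hl : t.lab [] with
    | none => rw [hl] at h; simp at h
    | some l => simp [hl]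
  cons p b := by
    constructor
    · intro hs
      have hs' : (t.lab (p ++ [b])).isSome := by simpa using hs
      obtain ⟨l', hl', hok⟩ := (t.cons p b).1 hs'
      exact ⟨shiftLab (σ (t.ldepth p)) l', by simp [hl'],
        (okChild_shiftLab _ _ _).2 hok⟩
    · rintro ⟨l', hl', hok⟩
      obtain ⟨l, hl, hfl⟩ := Option.map_eq_some_iff.mp (by simpa using hl')
      have hok' : okChild l b := by
        have := hfl ▸ hok
        exact (okChild_shiftLab (σ (t.ldepth p)) l b).1 this
      have hs : (t.lab (p ++ [b])).isSome := (t.cons p b).2 ⟨l, hl, hok'⟩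
      simpa using hs

/-- The term consisting of a single variable node with index 0. -/
def var0Tm : Tm where
  lab p := if p = [] then some (.var 0) else none
  root := by simp
  cons p b := by
    constructor
    · intro h
      simp only [List.append_eq_nil_iff] at h
      simp at h
    · rintro ⟨l, hl, hok⟩
      by_cases hp : p = []
      · subst hp
        simp only [if_pos rfl, Option.some.injEq] at hl
        cases hl
        cases b <;> simp [okChild] at hok
      · simp [hp] at hl

/-- The last-but-`j` abstraction-prefix variable occurs in `t`
(at λ-depth `d` inside the term it has de Bruijn index `j + d`). -/
def OccursJ (j : ℕ) (t : Tm) : Prop := ∃ p, t.lab p = some (.var (j + t.ldepth p))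

/-- Remove the prefix variable with base index `j` from the de Bruijn indexing. -/
def downJ (j : ℕ) (t : Tm) : Tm := t.mapVar (fun d k => if j + d < k then k - 1 else k)

/-- The last abstraction-prefix variable occurs. -/
def occurs0 : Tm → Prop := OccursJ 0

/-- Remove the (vacuous) last abstraction-prefix variable. -/
def down0 : Tm → Tm := downJ 0

/-- `t` has no free variables pointing outside the term itself. -/
def ClosedTm (t : Tm) : Prop := ∀ p k, t.lab p = some (.var k) → k < t.ldepth p

/-- Sequents: a prefix length together with an infinite λ-term. -/
abbrev TSeq : Type := ℕ × Tm

/-- λ-decomposition step of the ARS `Reg⁺`. -/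
def SLam (s s' : TSeq) : Prop :=
  s.2.lab [] = some .lam ∧ s'.1 = s.1 + 1 ∧
    ∃ h : (s.2.lab [false]).isSome, s'.2 = s.2.sub [false] h

/-- Left application-decomposition step. -/
def SApp0 (s s' : TSeq) : Prop :=
  s.2.lab [] = some .app ∧ s'.1 = s.1 ∧
    ∃ h : (s.2.lab [false]).isSome, s'.2 = s.2.sub [false] h

/-- Right application-decomposition step. -/
def SApp1 (s s' : TSeq) : Prop :=
  s.2.lab [] = some .app ∧ s'.1 = s.1 ∧
    ∃ h : (s.2.lab [true]).isSome, s'.2 = s.2.sub [true] h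

/-- Vacuous-prefix removal step (removal of the last prefix variable). -/
def SDel (s s' : TSeq) : Prop :=
  s.1 = s'.1 + 1 ∧ ¬ occurs0 s.2 ∧ s'.2 = down0 s.2

/-- The scope⁺-decomposition ARS `Reg⁺` on prefixed infinite λ-terms. -/
def Step (s s' : TSeq) : Prop := SLam s s' ∨ SApp0 s s' ∨ SApp1 s s' ∨ SDel s s'

/-- A (scope⁺-delimiting) strategy for the ARS `Reg⁺`: a sub-ARS with the
same objects and the same normal forms. -/
def Strategy (S : TSeq → TSeq → Prop) : Prop :=
  (∀ a b, S a b → Step a b) ∧ (∀ a, (∃ b, Step a b) → ∃ b, S a b)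

/-- An infinite λ-term is strongly regular if some scope⁺-delimiting strategy
reaches only finitely many sequents from it. -/
def StronglyRegular (M : Tm) : Prop :=
  ∃ S : TSeq → TSeq → Prop, Strategy S ∧ {s | Relation.ReflTransGen S (0, M) s}.Finite

/-- Natural-deduction derivations of the proof systems `Reg` (`plus = false`)
and `Reg⁺` (`plus = true`) on prefixed infinite λ-terms, with a context of
open marked assumptions.  Side-conditions on FIX are recorded separately. -/
inductive Deriv (plus : Bool) : List TSeq → TSeq → Type
  | assum (Γ : List TSeq) (i : Fin Γ.length) : Deriv plus Γ (Γ.get i)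
  | ax (Γ : List TSeq) (n : ℕ) (h1 : 1 ≤ n) (h2 : plus = false → n = 1) :
      Deriv plus Γ (n, var0Tm)
  | lam (Γ : List TSeq) (n : ℕ) (t : Tm) (h : t.lab [] = some .lam)
      (hs : (t.lab [false]).isSome) (D : Deriv plus Γ (n + 1, t.sub [false] hs)) :
      Deriv plus Γ (n, t)
  | app (Γ : List TSeq) (n : ℕ) (t : Tm) (h : t.lab [] = some .app)
      (h0 : (t.lab [false]).isSome) (h1 : (t.lab [true]).isSome)
      (D0 : Deriv plus Γ (n, t.sub [false] h0)) (D1 : Deriv plus Γ (n, t.sub [true] h1)) :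
      Deriv plus Γ (n, t)
  | del (Γ : List TSeq) (n : ℕ) (t : Tm) (j : ℕ) (hj : j ≤ n) (hp : plus = true → j = 0)
      (hocc : ¬ OccursJ j t) (D : Deriv plus Γ (n, downJ j t)) : Deriv plus Γ (n + 1, t)
  | fix (Γ : List TSeq) (s : TSeq) (D : Deriv plus (s :: Γ) s) : Deriv plus Γ s

namespace Deriv

/-- Depth (number of rule instances on a longest thread). -/
def depth : ∀ {plus Γ s}, Deriv plus Γ s → ℕ
  | _, _, _, .assum _ _ => 0
  | _, _, _, .ax _ _ _ _ => 0
  | _, _, _, .lam _ _ _ _ _ D => D.depth + 1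
  | _, _, _, .app _ _ _ _ _ _ D0 D1 => max D0.depth D1.depth + 1
  | _, _, _, .del _ _ _ _ _ _ _ D => D.depth + 1
  | _, _, _, .fix _ _ D => D.depth + 1

/-- The side-condition of `Reg`/`Reg⁺`: every FIX instance has an immediate
subderivation of depth at least 1. -/
def SC : ∀ {plus Γ s}, Deriv plus Γ s → Prop
  | _, _, _, .assum _ _ => True
  | _, _, _, .ax _ _ _ _ => True
  | _, _, _, .lam _ _ _ _ _ D => D.SC
  | _, _, _, .app _ _ _ _ _ _ D0 D1 => D0.SC ∧ D1.SC
  | _, _, _, .del _ _ _ _ _ _ _ D => D.SC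
  | _, _, _, .fix _ _ D => D.SC ∧ 1 ≤ D.depth

/-- `D.uses j` : some marked-assumption leaf of `D` refers to context entry `j`. -/
def uses : ∀ {plus Γ s}, Deriv plus Γ s → ℕ → Prop
  | _, _, _, .assum _ i, j => (i : ℕ) = j
  | _, _, _, .ax _ _ _ _, _ => False
  | _, _, _, .lam _ _ _ _ _ D, j => D.uses j
  | _, _, _, .app _ _ _ _ _ _ D0 D1, j => D0.uses j ∨ D1.uses j
  | _, _, _, .del _ _ _ _ _ _ _ D, j => D.uses j
  | _, _, _, .fix _ _ D, j => D.uses (j + 1)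

/-- `D.Holds m j` : every node of `D` whose subtree uses context entry `j`
(i.e. every node on a thread from such a marked assumption downwards)
has abstraction-prefix length at least `m`. -/
def Holds : ∀ {plus Γ s}, Deriv plus Γ s → ℕ → ℕ → Prop
  | _, _, _, .assum Γ i, m, j => ((i : ℕ) = j → m ≤ (Γ.get i).1)
  | _, _, _, .ax _ _ _ _, _, _ => True
  | _, _, _, .lam _ n _ _ _ D, m, j => (D.uses j → m ≤ n) ∧ D.Holds m j
  | _, _, _, .app _ n _ _ _ _ D0 D1, m, j =>
      ((D0.uses j ∨ D1.uses j) → m ≤ n) ∧ D0.Holds m j ∧ D1.Holds m j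
  | _, _, _, .del _ n _ _ _ _ _ D, m, j => (D.uses j → m ≤ n + 1) ∧ D.Holds m j
  | _, _, _, .fix _ s D, m, j => (D.uses (j + 1) → m ≤ s.1) ∧ D.Holds m (j + 1)

/-- The side-condition of `Reg₀⁺`: additionally, at every FIX instance all
sequents on threads from its open marked assumptions downwards have
abstraction prefix at least as long as the one of the assumption. -/
def SC0 : ∀ {plus Γ s}, Deriv plus Γ s → Prop
  | _, _, _, .assum _ _ => True
  | _, _, _, .ax _ _ _ _ => True
  | _, _, _, .lam _ _ _ _ _ D => D.SC0
  | _, _, _, .app _ _ _ _ _ _ D0 D1 => D0.SC0 ∧ D1.SC0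
  | _, _, _, .del _ _ _ _ _ _ _ D => D.SC0
  | _, _, _, .fix _ s D => D.SC0 ∧ 1 ≤ D.depth ∧ D.Holds s.1 0

/-- The set of sequents occurring in a derivation. -/
def seqs : ∀ {plus Γ s}, Deriv plus Γ s → Set TSeq
  | _, _, _, .assum Γ i => {Γ.get i}
  | _, _, _, .ax _ n _ _ => {(n, var0Tm)}
  | _, _, _, .lam _ n t _ _ D => insert (n, t) D.seqs
  | _, _, _, .app _ n t _ _ _ D0 D1 => insert (n, t) (D0.seqs ∪ D1.seqs)
  | _, _, _, .del _ n t _ _ _ _ D => insert (n + 1, t) D.seqs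
  | _, _, _, .fix _ s D => insert s D.seqs

end Deriv

/-- Labelling of the infinite term `W` defined by the guarded recursion
`W = λb. (W b') a`, i.e. `W = lam (app W (var 1))` (nameless):
this is `R(a)` for `R(x) = λy. (R(y)) x` at `x = var 0`. -/
def labW : List Bool → Option Lab
  | [] => some .lam
  | [false] => some .app
  | false :: false :: p => labW p
  | false :: true :: p => if p = [] then some (.var 1) else none
  | true :: _ => none

theorem labW_cons : ∀ (p : List Bool) (b : Bool),
    (labW (p ++ [b])).isSome ↔ ∃ l, labW p = some l ∧ okChild l b := by
  intro p
  induction p using labW.induct with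
  | case1 =>
    intro b
    cases b <;> simp [labW, okChild]
  | case2 =>
    intro b
    cases b <;> simp [labW, okChild]
  | case3 p ih =>
    intro b
    simpa [labW] using ih b
  | case4 =>
    intro b
    cases b <;> simp [labW, okChild]
  | case5 p h =>
    intro b
    cases b <;> simp [labW, okChild, h]
  | case6 =>
    intro b
    simp [labW]

/-- The infinite λ-term `W = lam (app W (var 1))`. -/
def Wtm : Tm where
  lab := labW
  root := by simp [labW]
  cons := labW_cons

/-- The infinite λ-term `M₂ = λa. R(a)` with `R(x) = λy. (R(y)) x`,
i.e. `M₂ = lam W`. -/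
def M2 : Tm where
  lab p := match p with
    | [] => some .lam
    | false :: q => labW q
    | true :: _ => none
  root := by simp
  cons p b := by
    rcases p with _ | ⟨c, q⟩
    · cases b <;> simp [labW, okChild]
    · cases c
      · simpa using labW_cons q b
      · simp

theorem Tm.ext' {t t' : Tm} (h : t.lab = t'.lab) : t = t' := by
  cases t; cases t'; cases h; rfl

theorem wroot : Wtm.lab [false] = some .app := rfl

def WAtm : Tm := Wtm.sub [false] (by rfl)

example (h : (M2.lab [false]).isSome) : M2.sub [false] h = Wtm := rfl
example (h : (Wtm.lab [false]).isSome) : Wtm.sub [false] h = WAtm := rfl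
example (h : (WAtm.lab [false]).isSome) : WAtm.sub [false] h = Wtm := rfl

def V1tm : Tm where
  lab p := if p = [] then some (.var 1) else none
  root := by simp
  cons p b := by
    constructor
    · intro h
      simp only [List.append_eq_nil_iff] at h
      simp at h
    · rintro ⟨l, hl, hok⟩
      by_cases hp : p = []
      · subst hp; simp only [if_pos rfl, Option.some.injEq] at hl
        cases hl; cases b <;> simp [okChild] at hok
      · simp [hp] at hl

example (h : (WAtm.lab [true]).isSome) : WAtm.sub [true] h = V1tm := by
  apply Tm.ext'; funext q
  show labW (false :: true :: q) = _
  cases q <;> rfl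

theorem labW_var : ∀ p k, labW p = some (.var k) → k = 1 := by
  intro p
  induction p using labW.induct with
  | case1 => intro k h; simp [labW] at h
  | case2 => intro k h; simp [labW] at h
  | case3 p ih => intro k h; exact ih k h
  | case4 => intro k h; rw [show labW [false, true] = some (.var 1) from rfl] at h; cases h; rfl
  | case5 p h => intro k hk; simp [labW, h] at hk
  | case6 => intro k h; simp [labW] at h

theorem ldepth_pos (t : Tm) (b : Bool) (p : List Bool) (h : t.lab [] = some .lam) :
    1 ≤ t.ldepth (b :: p) := by
  show 1 ≤ t.ldepthAux [] (b :: p)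
  rw [Tm.ldepthAux, h]
  simp

theorem not_occursJ1_W : ¬ OccursJ 1 Wtm := by
  rintro ⟨p, hp⟩
  match p, hp with
  | [], hp => exact Lab.noConfusion (Option.some.inj hp)
  | b :: q, hp =>
    have hk := labW_var _ _ hp
    have := ldepth_pos Wtm b q rfl
    omega

theorem downJ1_W : downJ 1 Wtm = Wtm := by
  apply Tm.ext'; funext p
  show (labW p).map _ = labW p
  cases hl : labW p with
  | none => rfl
  | some l =>
    cases l with
    | lam => rfl
    | app => rfl
    | var k =>
      have := labW_var p k hl
      subst this
      simp [shiftLab]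

theorem occursJ0_W : OccursJ 0 Wtm := by
  refine ⟨[false, true], ?_⟩
  have : Wtm.ldepth [false, true] = 1 := by decide
  rw [this]; rfl

theorem occursJ0_WA : OccursJ 0 WAtm := by
  refine ⟨[false, false, true], ?_⟩
  have : WAtm.ldepth [false, false, true] = 1 := by decide
  rw [this]; rfl

theorem not_occurs0_V1 : ¬ OccursJ 0 V1tm := by
  rintro ⟨p, hp⟩
  by_cases h : p = []
  · subst h
    have : V1tm.ldepth [] = 0 := rfl
    rw [this] at hp
    exact absurd (Option.some.inj hp) (by simp [V1tm])
  · have : V1tm.lab p = none := by simp [V1tm, h]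
    rw [this] at hp; cases hp

theorem down0_V1 : downJ 0 V1tm = var0Tm := by
  apply Tm.ext'; funext p
  show (V1tm.lab p).map _ = var0Tm.lab p
  by_cases h : p = []
  · subst h
    show ((if ([]:List Bool) = [] then some (Lab.var 1) else none).map _) = _
    have : V1tm.ldepth [] = 0 := rfl
    simp [var0Tm, this, shiftLab]
  · simp [V1tm, var0Tm, h]

theorem wtm_ne_var0 : Wtm ≠ var0Tm := by
  intro h
  have := congrArg (fun u : Tm => u.lab []) h
  simp [Wtm, labW, var0Tm] at this

theorem watm_ne_var0 : WAtm ≠ var0Tm := by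
  intro h
  have := congrArg (fun u : Tm => u.lab []) h
  have e : WAtm.lab [] = some .app := rfl
  rw [e] at this
  simp [var0Tm] at this

theorem m2_ne_var0 : M2 ≠ var0Tm := by
  intro h
  have := congrArg (fun u : Tm => u.lab []) h
  simp [M2, var0Tm] at this

theorem m2_ne_wtm : M2 ≠ Wtm := by
  intro h
  have := congrArg (fun u : Tm => u.lab [false]) h
  have e1 : M2.lab [false] = some .lam := rfl
  have e2 : Wtm.lab [false] = some .app := rfl
  rw [e1, e2] at this
  simp at this

theorem m2_ne_watm : M2 ≠ WAtm := by
  intro h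
  have := congrArg (fun u : Tm => u.lab []) h
  have e1 : M2.lab [] = some .lam := rfl
  have e2 : WAtm.lab [] = some .app := rfl
  rw [e1, e2] at this
  simp at this

theorem wtm_ne_watm : Wtm ≠ WAtm := by
  intro h
  have := congrArg (fun u : Tm => u.lab []) h
  have e1 : Wtm.lab [] = some .lam := rfl
  have e2 : WAtm.lab [] = some .app := rfl
  rw [e1, e2] at this
  simp at this

def Cond (Γ : List TSeq) (s : TSeq) (dep : ℕ) : Prop :=
  (s.2 = M2 ∧ s.1 = 0 ∧ (∀ m, (m, Wtm) ∉ Γ) ∧ (∀ m, (m, WAtm) ∉ Γ) ∧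
      (1 ≤ dep ∨ ∀ m, (m, M2) ∉ Γ)) ∨
  (s.2 = Wtm ∧ (∀ m, (m, Wtm) ∈ Γ → m ≤ s.1) ∧ (∀ m, (m, WAtm) ∈ Γ → m ≤ s.1) ∧
      (1 ≤ dep ∨ ∀ m, (m, Wtm) ∈ Γ → m < s.1)) ∨
  (s.2 = WAtm ∧ (∀ m, (m, Wtm) ∈ Γ → m < s.1) ∧ (∀ m, (m, WAtm) ∈ Γ → m ≤ s.1) ∧
      (1 ≤ dep ∨ ∀ m, (m, WAtm) ∈ Γ → m < s.1))

theorem main_neg : ∀ {Γ : List TSeq} {s : TSeq} (D : Deriv true Γ s),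
    D.SC → Cond Γ s D.depth → False := by
  intro Γ s D
  induction D with
  | assum Γ i =>
    intro _ hc
    have hmem : Γ.get i ∈ Γ := Γ.get_mem i
    rcases hc with ⟨h2, _, _, _, hd⟩ | ⟨h2, _, _, hd⟩ | ⟨h2, _, _, hd⟩ <;>
      [skip; skip; skip] <;>
    · rcases hd with hd | hd
      · simp [Deriv.depth] at hd
      · have : ((Γ.get i).1, (Γ.get i).2) ∈ Γ := by simpa using hmem
        rw [h2] at this
        first
          | exact hd _ this
          | exact absurd ((by rw [h2] at this; exact this : _)) (by exact fun h => hd _ this)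
          | exact absurd this (hd _)
          | exact Nat.lt_irrefl _ (hd _ this)
  | ax Γ n h1 h2 =>
    intro _ hc
    rcases hc with ⟨h2, _⟩ | ⟨h2, _⟩ | ⟨h2, _⟩
    · exact m2_ne_var0 h2.symm
    · exact wtm_ne_var0 h2.symm
    · exact watm_ne_var0 h2.symm
  | lam Γ n t h hs D ih =>
    intro hsc hc
    simp only [Deriv.SC] at hsc
    rcases hc with ⟨h2, h0, hW, hA, _⟩ | ⟨h2, hW, hA, _⟩ | ⟨h2, _, _, _⟩
    · -- t = M2 : child is (n+1, Wtm) = (1, Wtm)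
      dsimp only at h2 h0
      subst h2
      apply ih hsc
      refine Or.inr (Or.inl ⟨?_, ?_, ?_, Or.inr ?_⟩)
      · show M2.sub [false] hs = Wtm
        rfl
      · intro m hm; exact absurd hm (hW m)
      · intro m hm; exact absurd hm (hA m)
      · intro m hm; exact absurd hm (hW m)
    · -- t = Wtm : child is (n+1, WAtm)
      dsimp only at h2
      subst h2
      apply ih hsc
      refine Or.inr (Or.inr ⟨?_, ?_, ?_, Or.inr ?_⟩)
      · show Wtm.sub [false] hs = WAtm
        rfl
      · intro m hm; exact Nat.lt_succ_of_le (hW m hm)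
      · intro m hm; exact Nat.le_succ_of_le (hA m hm)
      · intro m hm; exact Nat.lt_succ_of_le (hA m hm)
    · -- t = WAtm : lab [] = app, contra
      dsimp only at h2
      subst h2
      have : Lab.app = Lab.lam := Option.some.inj ((rfl : WAtm.lab [] = some .app).symm.trans h)
      simp at this
  | app Γ n t h h0 h1 D0 D1 ih0 ih1 =>
    intro hsc hc
    simp only [Deriv.SC] at hsc
    rcases hc with ⟨h2, _⟩ | ⟨h2, _⟩ | ⟨h2, hW, hA, _⟩
    · dsimp only at h2; subst h2
      have : Lab.lam = Lab.app := Option.some.inj ((rfl : M2.lab [] = some .lam).symm.trans h)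
      simp at this
    · dsimp only at h2; subst h2
      have : Lab.lam = Lab.app := Option.some.inj ((rfl : Wtm.lab [] = some .lam).symm.trans h)
      simp at this
    · dsimp only at h2; subst h2
      apply ih0 hsc.1
      refine Or.inr (Or.inl ⟨?_, ?_, ?_, Or.inr ?_⟩)
      · show WAtm.sub [false] h0 = Wtm
        rfl
      · intro m hm; exact Nat.le_of_lt (hW m hm)
      · intro m hm; exact hA m hm
      · intro m hm; exact hW m hm
  | del Γ n t j hj hp hocc D ih =>
    intro _ hc
    have hj0 : j = 0 := hp rfl
    subst hj0
    rcases hc with ⟨_, h0, _⟩ | ⟨h2, _⟩ | ⟨h2, _⟩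
    · dsimp only at h0; omega
    · dsimp only at h2; subst h2; exact hocc occursJ0_W
    · dsimp only at h2; subst h2; exact hocc occursJ0_WA
  | fix Γ s D ih =>
    intro hsc hc
    simp only [Deriv.SC] at hsc
    obtain ⟨hsc', hdep⟩ := hsc
    apply ih hsc'
    rcases hc with ⟨h2, h0, hW, hA, _⟩ | ⟨h2, hW, hA, _⟩ | ⟨h2, hW, hA, _⟩
    · refine Or.inl ⟨h2, h0, ?_, ?_, Or.inl hdep⟩
      · intro m hm
        rcases List.mem_cons.1 hm with hm | hm
        · have : s.2 = Wtm := by rw [← hm]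
          exact m2_ne_wtm (h2 ▸ this)
        · exact hW m hm
      · intro m hm
        rcases List.mem_cons.1 hm with hm | hm
        · have : s.2 = WAtm := by rw [← hm]
          exact m2_ne_watm (h2 ▸ this)
        · exact hA m hm
    · refine Or.inr (Or.inl ⟨h2, ?_, ?_, Or.inl hdep⟩)
      · intro m hm
        rcases List.mem_cons.1 hm with hm | hm
        · have : m = s.1 := by rw [← hm]
          exact this.le
        · exact hW m hm
      · intro m hm
        rcases List.mem_cons.1 hm with hm | hm
        · exact absurd (h2 ▸ (by rw [← hm] : s.2 = WAtm)) wtm_ne_watm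
        · exact hA m hm
    · refine Or.inr (Or.inr ⟨h2, ?_, ?_, Or.inl hdep⟩)
      · intro m hm
        rcases List.mem_cons.1 hm with hm | hm
        · exact absurd (h2 ▸ (by rw [← hm] : s.2 = Wtm)).symm wtm_ne_watm
        · exact hW m hm
      · intro m hm
        rcases List.mem_cons.1 hm with hm | hm
        · have : m = s.1 := by rw [← hm]
          exact this.le
        · exact hA m hm

/-- Cast a derivation along an equality of the subject term. -/
def Deriv.castTm {plus : Bool} {Γ : List TSeq} {n : ℕ} {t t' : Tm} (e : t = t')
    (D : Deriv plus Γ (n, t)) : Deriv plus Γ (n, t') := e ▸ D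

theorem Deriv.sc_castTm {plus : Bool} {Γ : List TSeq} {n : ℕ} {t t' : Tm} (e : t = t')
    (D : Deriv plus Γ (n, t)) : (D.castTm e).SC ↔ D.SC := by subst e; rfl

theorem eqV1 : WAtm.sub [true] (by rfl) = V1tm := by
  apply Tm.ext'; funext q
  show labW (false :: true :: q) = _
  cases q <;> rfl

/-- The `Reg`-derivation of `() M₂`. -/
def DV : Deriv false [(1, Wtm)] (2, V1tm) :=
  .del _ 1 V1tm 0 (by omega) (by simp) not_occurs0_V1
    (Deriv.castTm down0_V1.symm (.ax _ 1 le_rfl (fun _ => rfl)))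

def DW : Deriv false [(1, Wtm)] (2, Wtm) :=
  .del _ 1 Wtm 1 le_rfl (by simp) not_occursJ1_W
    (Deriv.castTm downJ1_W.symm (.assum [(1, Wtm)] ⟨0, by simp⟩))

def DWA : Deriv false [(1, Wtm)] (2, WAtm) :=
  .app _ 2 WAtm rfl (by rfl) (by rfl) DW (Deriv.castTm eqV1.symm DV)

def DL : Deriv false [((1:ℕ), Wtm)] (1, Wtm) := Deriv.lam _ 1 Wtm rfl (by rfl) DWA

def Dfix : Deriv false [] (1, Wtm) := .fix _ _ DL

def Droot : Deriv false [] (0, M2) := .lam _ 0 M2 rfl (by rfl) Dfix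

theorem Deriv.SC_lam {plus : Bool} (Γ : List TSeq) (n : ℕ) (t : Tm) (h : t.lab [] = some .lam)
    (hs : (t.lab [false]).isSome) (D : Deriv plus Γ (n + 1, t.sub [false] hs)) :
    (Deriv.lam Γ n t h hs D).SC = D.SC := by simp only [Deriv.SC]

theorem Deriv.depth_lam {plus : Bool} (Γ : List TSeq) (n : ℕ) (t : Tm) (h : t.lab [] = some .lam)
    (hs : (t.lab [false]).isSome) (D : Deriv plus Γ (n + 1, t.sub [false] hs)) :
    (Deriv.lam Γ n t h hs D).depth = D.depth + 1 := by simp only [Deriv.depth]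

theorem Deriv.SC_app {plus : Bool} (Γ : List TSeq) (n : ℕ) (t : Tm) (h : t.lab [] = some .app)
    (h0 : (t.lab [false]).isSome) (h1 : (t.lab [true]).isSome)
    (D0 : Deriv plus Γ (n, t.sub [false] h0)) (D1 : Deriv plus Γ (n, t.sub [true] h1)) :
    (Deriv.app Γ n t h h0 h1 D0 D1).SC = (D0.SC ∧ D1.SC) := by simp only [Deriv.SC]

theorem Droot_SC : Droot.SC := by
  have e1 : Droot.SC = Dfix.SC := by
    exact Deriv.SC_lam [] 0 M2 rfl (by rfl) Dfix
  have e2 : Dfix.SC = (DL.SC ∧ 1 ≤ DL.depth) := by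
    rw [show Dfix = .fix _ _ DL from rfl]; simp only [Deriv.SC]
  have e3 : DL.SC = DWA.SC := by
    exact Deriv.SC_lam _ _ _ _ _ DWA
  have e4 : DWA.SC = (DW.SC ∧ (Deriv.castTm eqV1.symm DV).SC) := by
    exact Deriv.SC_app _ _ _ _ _ _ DW (Deriv.castTm eqV1.symm DV)
  have e5 : DW.SC = (Deriv.castTm downJ1_W.symm (.assum [(1, Wtm)] ⟨0, by simp⟩) :
      Deriv false _ (1, downJ 1 Wtm)).SC := by
    rw [show DW = .del _ 1 Wtm 1 le_rfl (by simp) not_occursJ1_W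
      (Deriv.castTm downJ1_W.symm (.assum [(1, Wtm)] ⟨0, by simp⟩)) from rfl]
    simp only [Deriv.SC]
  have e6 : DV.SC = (Deriv.castTm down0_V1.symm (.ax [((1:ℕ), Wtm)] 1 le_rfl (fun _ => rfl)) :
      Deriv false _ (1, downJ 0 V1tm)).SC := by
    rw [show DV = .del _ 1 V1tm 0 (by omega) (by simp) not_occurs0_V1
      (Deriv.castTm down0_V1.symm (.ax _ 1 le_rfl (fun _ => rfl))) from rfl]
    simp only [Deriv.SC]
  have e7 : 1 ≤ DL.depth := by
    rw [show DL.depth = DWA.depth + 1 from Deriv.depth_lam _ _ _ _ _ DWA]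
    omega
  rw [e1, e2, e3, e4, e5, Deriv.sc_castTm, Deriv.sc_castTm, e6, Deriv.sc_castTm]
  refine ⟨⟨?_, ?_⟩, e7⟩ <;> simp only [Deriv.SC] <;> trivial

theorem step_M2_W : Step ((0:ℕ), M2) (1, Wtm) := by
  refine Or.inl ⟨rfl, rfl, (by rfl), ?_⟩
  show Wtm = M2.sub [false] _
  rfl

theorem step_W_WA (n : ℕ) : Step (n, Wtm) (n + 1, WAtm) := by
  refine Or.inl ⟨rfl, rfl, (by rfl), ?_⟩
  show WAtm = Wtm.sub [false] _
  rfl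

theorem step_WA_W (n : ℕ) : Step (n, WAtm) (n, Wtm) := by
  refine Or.inr (Or.inl ⟨rfl, rfl, (by rfl), ?_⟩)
  show Wtm = WAtm.sub [false] _
  rfl

theorem reach_W (n : ℕ) : Relation.ReflTransGen Step ((0:ℕ), M2) (n + 1, Wtm) := by
  induction n with
  | zero => exact Relation.ReflTransGen.single step_M2_W
  | succ n ih =>
    exact (ih.tail (step_W_WA (n + 1))).tail (step_WA_W (n + 2))


/-- The infinite λ-term `M₂ = λa. R(a)` with
`R(x) = λy. (R(y)) x` is derivable in the proof system `Reg`
(where del may remove any vacuous prefix variable, and the axiom is `(y) y`),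
but not derivable in `Reg⁺` (where del may only remove the last prefix
variable); moreover in the scope⁺-decomposition ARS the set of sequents
reachable from `() M₂` is infinite.  Hence `M₂` is regular but not strongly
regular, and derivability in `Reg` is strictly weaker than in `Reg⁺`. -/
theorem stmt19 :
    (∃ D : Deriv false [] ((0 : ℕ), M2), D.SC) ∧
    (¬ ∃ D : Deriv true [] ((0 : ℕ), M2), D.SC) ∧
    {s | Relation.ReflTransGen Step ((0 : ℕ), M2) s}.Infinite := by
  refine ⟨⟨Droot, Droot_SC⟩, ?_, ?_⟩
  · rintro ⟨D, hsc⟩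
    exact main_neg D hsc (Or.inl ⟨rfl, rfl, by simp, by simp, Or.inr (by simp)⟩)
  · apply Set.infinite_of_injective_forall_mem
      (f := fun n : ℕ => ((n + 1, Wtm) : TSeq))
    · intro a b h
      simpa using congrArg Prod.fst h
    · intro n
      exact reach_W n
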